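/- The discrete expected shortfall dES_{k/n}: ℝ^n → ℝ defined by dES_{k/n}(x) = −(1/k)∑_{i=1}^k x_{i:n} is a coherent risk estimator: it is monotone (coordinatewise x ≤ y implies dES_{k/n}(x) ≥ dES_{k/n}(y)), cash additive (dES_{k/n}(x + m·1) = dES_{k/n}(x) − m), positively homogeneous, and subadditive. -/

import Mathlib

/-- The `i`-th order statistic (`i`-th smallest coordinate, `i = 1,…,n`) of `x ∈ ℝ^n`. -/
noncomputable def orderStat {n : ℕ} (x : Fin n → ℝ) (i : ℕ) : ℝ :=
  ((Finset.univ.val.map x).sort (· ≤ ·)).getD (i - 1) 0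

/-- Discrete expected shortfall at level `k/n`: `-(1/k) ∑_{i=1}^k x_{i:n}`. -/
noncomputable def dES {n : ℕ} (k : ℕ) (x : Fin n → ℝ) : ℝ :=
  -(1 / (k : ℝ)) * ∑ i ∈ Finset.Icc 1 k, orderStat x i

open Finset

/-- The sorted list of the values of `y` is `List.ofFn` of any monotone rearrangement. -/
lemma sortList_eq_ofFn' {n : ℕ} (y : Fin n → ℝ) (σ : Equiv.Perm (Fin n))
    (h : Monotone (y ∘ σ)) :
    ((Finset.univ.val.map y).sort (· ≤ ·)) = List.ofFn (y ∘ σ) := by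
  refine List.Perm.eq_of_pairwise' (Multiset.pairwise_sort _ _) h.sortedLE_ofFn.pairwise ?_
  rw [← Multiset.coe_eq_coe, Multiset.sort_eq]
  have hperm : (Finset.univ.val.map (⇑σ)) = (Finset.univ.val : Multiset (Fin n)) := by
    have := Finset.map_univ_equiv σ
    calc Finset.univ.val.map (⇑σ) = (Finset.univ.map σ.toEmbedding).val := by
          rw [Finset.map_val]; rfl
      _ = Finset.univ.val := by rw [this]
  calc (Finset.univ.val.map y) = (Finset.univ.val.map (⇑σ)).map y := by rw [hperm]
    _ = Finset.univ.val.map (y ∘ ⇑σ) := by rw [Multiset.map_map]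
    _ = ↑(List.ofFn (y ∘ ⇑σ)) := by rw [Fin.univ_val_map]

lemma orderStat_eq_ofFn {n : ℕ} (y : Fin n → ℝ) (σ : Equiv.Perm (Fin n))
    (h : Monotone (y ∘ σ)) (j : ℕ) (hj : j < n) :
    orderStat y (j + 1) = y (σ ⟨j, hj⟩) := by
  rw [orderStat, sortList_eq_ofFn' y σ h]
  have hlen : j < (List.ofFn (y ∘ ⇑σ)).length := by simpa using hj
  rw [Nat.add_sub_cancel, List.getD_eq_getElem _ _ hlen]
  simp

lemma orderStat_eq {n : ℕ} (x : Fin n → ℝ) (j : ℕ) (hj : j < n) :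
    orderStat x (j + 1) = x (Tuple.sort x ⟨j, hj⟩) :=
  orderStat_eq_ofFn x (Tuple.sort x) (Tuple.monotone_sort x) j hj

lemma dES_eq {n k : ℕ} (x : Fin n → ℝ) :
    dES k x = -(1 / (k : ℝ)) * ∑ j ∈ Finset.range k, orderStat x (j + 1) := by
  rw [dES]
  congr 1
  have h1 : Finset.Icc 1 k = Finset.Ico 1 (k + 1) := by
    ext i; simp [Nat.lt_succ_iff]
  rw [h1, Finset.sum_Ico_eq_sum_range]
  simp [add_comm]

/-- `j ≤ f j` for a strictly monotone map between `Fin` types. -/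
lemma strictMono_le_apply {k n : ℕ} {f : Fin k → Fin n} (hf : StrictMono f) :
    ∀ (m : ℕ) (hm : m < k), m ≤ (f ⟨m, hm⟩ : ℕ) := by
  intro m
  induction m with
  | zero => intro _; exact Nat.zero_le _
  | succ i ih =>
    intro hm
    have hi : i < k := Nat.lt_of_succ_lt hm
    have hlt : f ⟨i, hi⟩ < f ⟨i + 1, hm⟩ := hf (by simp [Fin.lt_def])
    have := ih hi
    have hlt' : (f ⟨i, hi⟩ : ℕ) < (f ⟨i + 1, hm⟩ : ℕ) := hlt
    omega

/-- The sum of the `k` smallest coordinates is at most the sum over any `k` coordinates. -/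
lemma sum_orderStat_le {n k : ℕ} (hkn : k ≤ n) (x : Fin n → ℝ)
    (A : Finset (Fin n)) (hA : A.card = k) :
    ∑ j ∈ Finset.range k, orderStat x (j + 1) ≤ ∑ i ∈ A, x i := by
  classical
  set σ := Tuple.sort x with hσ
  set g : Fin n → ℝ := x ∘ σ with hg
  have hgmono : Monotone g := Tuple.monotone_sort x
  set B : Finset (Fin n) := A.image σ.symm with hB
  have hBcard : B.card = k := by
    rw [hB, Finset.card_image_of_injective _ σ.symm.injective, hA]
  -- sum over A equals sum of g over B
  have hsumA : ∑ i ∈ A, x i = ∑ i ∈ B, g i := by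
    rw [hB, Finset.sum_image (fun a _ b _ h => σ.symm.injective h)]
    apply Finset.sum_congr rfl
    intro i _
    simp [hg, hσ]
  set e := B.orderEmbOfFin hBcard with he
  have hBimage : B = Finset.image e Finset.univ := by
    ext i
    constructor
    · intro hi
      have : i ∈ Set.range e := by
        rw [Finset.range_orderEmbOfFin]; exact hi
      obtain ⟨j, hj⟩ := this
      exact Finset.mem_image.mpr ⟨j, Finset.mem_univ j, hj⟩
    · intro hi
      obtain ⟨j, _, hj⟩ := Finset.mem_image.mp hi
      have : e j ∈ Set.range e := ⟨j, rfl⟩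
      rw [Finset.range_orderEmbOfFin] at this
      rw [← hj]; exact this
  have hsumB : ∑ i ∈ B, g i = ∑ j : Fin k, g (e j) := by
    rw [hBimage, Finset.sum_image (fun a _ b _ h => (B.orderEmbOfFin hBcard).injective h)]
  rw [hsumA, hsumB, Finset.sum_range fun j => orderStat x (j + 1)]
  apply Finset.sum_le_sum
  intro j _
  have hjn : (j : ℕ) < n := lt_of_lt_of_le j.isLt hkn
  rw [orderStat_eq x j hjn]
  have hle : (⟨(j : ℕ), hjn⟩ : Fin n) ≤ e j := by
    rw [Fin.le_def]
    exact strictMono_le_apply (B.orderEmbOfFin hBcard).strictMono (j : ℕ) j.isLt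
  exact hgmono hle

/-- The minimum is attained. -/
lemma sum_orderStat_exists {n k : ℕ} (hkn : k ≤ n) (x : Fin n → ℝ) :
    ∃ A : Finset (Fin n), A.card = k ∧
      ∑ j ∈ Finset.range k, orderStat x (j + 1) = ∑ i ∈ A, x i := by
  classical
  set σ := Tuple.sort x with hσ
  have hinj : Function.Injective (fun j : Fin k => σ (Fin.castLE hkn j)) :=
    fun a b h => (Fin.castLE_injective hkn) (σ.injective h)
  refine ⟨Finset.image (fun j : Fin k => σ (Fin.castLE hkn j)) Finset.univ, ?_, ?_⟩
  · rw [Finset.card_image_of_injective _ hinj, Finset.card_univ, Fintype.card_fin]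
  · rw [Finset.sum_image (fun a _ b _ h => hinj h)]
    rw [Finset.sum_range fun j => orderStat x (j + 1)]
    apply Finset.sum_congr rfl
    intro j _
    have hjn : (j : ℕ) < n := lt_of_lt_of_le j.isLt hkn
    rw [orderStat_eq x j hjn]
    congr 1

/-- `dES_{k/n}` is a coherent risk estimator: monotone, cash additive,
positively homogeneous and subadditive. -/
theorem dES_is_coherent (n k : ℕ) (hk1 : 1 ≤ k) (hkn : k ≤ n) :
    (∀ x y : Fin n → ℝ, (∀ i, x i ≤ y i) → dES k y ≤ dES k x) ∧
    (∀ (x : Fin n → ℝ) (m : ℝ), dES k (fun i => x i + m) = dES k x - m) ∧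
    (∀ (x : Fin n → ℝ) (l : ℝ), 0 ≤ l → dES k (fun i => l * x i) = l * dES k x) ∧
    (∀ x y : Fin n → ℝ, dES k (fun i => x i + y i) ≤ dES k x + dES k y) := by
  have hk0 : (k : ℝ) ≠ 0 := Nat.cast_ne_zero.mpr (Nat.one_le_iff_ne_zero.mp hk1)
  have hknonneg : (0 : ℝ) ≤ 1 / (k : ℝ) := by positivity
  refine ⟨?_, ?_, ?_, ?_⟩
  · -- monotone
    intro x y hxy
    obtain ⟨A, hAcard, hAeq⟩ := sum_orderStat_exists hkn y
    have h1 : ∑ j ∈ Finset.range k, orderStat x (j + 1) ≤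
        ∑ j ∈ Finset.range k, orderStat y (j + 1) := by
      calc ∑ j ∈ Finset.range k, orderStat x (j + 1) ≤ ∑ i ∈ A, x i :=
            sum_orderStat_le hkn x A hAcard
        _ ≤ ∑ i ∈ A, y i := Finset.sum_le_sum fun i _ => hxy i
        _ = ∑ j ∈ Finset.range k, orderStat y (j + 1) := hAeq.symm
    rw [dES_eq, dES_eq]
    have := mul_le_mul_of_nonneg_left h1 hknonneg
    linarith
  · -- cash additive
    intro x m
    have hsum : ∀ j ∈ Finset.range k,
        orderStat (fun i => x i + m) (j + 1) = orderStat x (j + 1) + m := by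
      intro j hj
      have hjn : j < n := lt_of_lt_of_le (Finset.mem_range.mp hj) hkn
      have hmono : Monotone ((fun i => x i + m) ∘ ⇑(Tuple.sort x)) := by
        have := Tuple.monotone_sort x
        intro a b hab
        simpa using this hab
      rw [orderStat_eq_ofFn (fun i => x i + m) (Tuple.sort x) hmono j hjn,
        orderStat_eq x j hjn]
    rw [dES_eq, dES_eq, Finset.sum_congr rfl hsum, Finset.sum_add_distrib]
    simp only [Finset.sum_const, Finset.card_range, nsmul_eq_mul]
    field_simp
    ring
  · -- positively homogeneous
    intro x l hl
    have hsum : ∀ j ∈ Finset.range k,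
        orderStat (fun i => l * x i) (j + 1) = l * orderStat x (j + 1) := by
      intro j hj
      have hjn : j < n := lt_of_lt_of_le (Finset.mem_range.mp hj) hkn
      have hmono : Monotone ((fun i => l * x i) ∘ ⇑(Tuple.sort x)) := by
        have := Tuple.monotone_sort x
        intro a b hab
        exact mul_le_mul_of_nonneg_left (this hab) hl
      rw [orderStat_eq_ofFn (fun i => l * x i) (Tuple.sort x) hmono j hjn,
        orderStat_eq x j hjn]
    rw [dES_eq, dES_eq, Finset.sum_congr rfl hsum, ← Finset.mul_sum]
    ring
  · -- subadditive
    intro x y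
    obtain ⟨A, hAcard, hAeq⟩ := sum_orderStat_exists hkn (fun i => x i + y i)
    have h1 : ∑ j ∈ Finset.range k, orderStat x (j + 1) +
        ∑ j ∈ Finset.range k, orderStat y (j + 1) ≤
        ∑ j ∈ Finset.range k, orderStat (fun i => x i + y i) (j + 1) := by
      rw [hAeq, Finset.sum_add_distrib]
      exact add_le_add (sum_orderStat_le hkn x A hAcard) (sum_orderStat_le hkn y A hAcard)
    rw [dES_eq, dES_eq, dES_eq]
    have := mul_le_mul_of_nonneg_left h1 hknonneg
    linarith
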